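/- Per-pair error bound for ELRT. Let i ∈ Fin N be the true demand model and consider a pricing process under model i following the ELRT policy. Fix h ≠ i, set a_h = min over k ∈ Fin N of I(q i k ‖ q h k) > 0, let m_h and M_h be the minimum and maximum over k ∈ Fin N and y ∈ {0,1} of log(f i k y / f h k y), and set C_h = (M_h − m_h)²/(2 a_h²). Then for every t ≥ 1, P(L_{i,h}(t) < 0) ≤ exp(−2 a_h² t/(M_h − m_h)²), and consequently E[#{t ≥ 1 : L_{i,h}(t) < 0}] ≤ C_h. -/

import Mathlib

open MeasureTheory ProbabilityTheory Finset Real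

noncomputable section

/-- Probability of outcome `y ∈ {0,1}` under a Bernoulli distribution with success
probability `p`:  `f p y = p^y (1-p)^(1-y)`. -/
def bern (p : ℝ) (y : ℕ) : ℝ := p ^ y * (1 - p) ^ (1 - y)

/-- The Kullback–Leibler divergence between Bernoulli(α) and Bernoulli(β). -/
def klBern (α β : ℝ) : ℝ :=
  α * Real.log (α / β) + (1 - α) * Real.log ((1 - α) / (1 - β))

variable {Ω : Type*} {mΩ : MeasurableSpace Ω} {N : ℕ}

/-- The pairwise (unnormalized) log-likelihood statistic
`L_{i,h}(t) = ∑_{j=1}^t log (f_i^{a_j}(y_j) / f_h^{a_j}(y_j))`, with `L_{i,h}(0) = 0`. -/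
def LLRN (q : Fin N → Fin N → ℝ) (a : ℕ → Ω → Fin N) (y : ℕ → Ω → ℕ)
    (i h : Fin N) (t : ℕ) (ω : Ω) : ℝ :=
  ∑ j ∈ Finset.Icc 1 t,
    Real.log (bern (q i (a j ω)) (y j ω) / bern (q h (a j ω)) (y j ω))

/-- An `N`-demand-model pricing process under true demand model `i`: actions `a t` are
`ℱ (t-1)`-measurable, outcomes `y t ∈ {0,1}` are `ℱ t`-measurable, and the conditional
probability of a successful sale at time `t` given the past is `q i (a t)` a.s. -/
structure IsPricingProcessN (μ : Measure Ω) (ℱ : Filtration ℕ mΩ)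
    (q : Fin N → Fin N → ℝ) (i : Fin N) (a : ℕ → Ω → Fin N) (y : ℕ → Ω → ℕ) : Prop where
  meas_a : ∀ t, 1 ≤ t → Measurable[ℱ (t - 1)] (a t)
  meas_y : ∀ t, 1 ≤ t → Measurable[ℱ t] (y t)
  y_range : ∀ t, 1 ≤ t → ∀ ω, y t ω = 0 ∨ y t ω = 1
  sale_prob : ∀ t, 1 ≤ t →
    μ[Set.indicator {ω | y t ω = 1} (fun _ => (1 : ℝ)) | ℱ (t - 1)]
      =ᵐ[μ] fun ω => q i (a t ω)

/-- The ELRT policy: for `t ≥ 1`, `a (t+1) = k` whenever `k` is an index with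
`L_{k,j}(t) > 0` for every `j ≠ k` (an arbitrary choice is made if no such `k` exists). -/
def IsELRT (q : Fin N → Fin N → ℝ) (a : ℕ → Ω → Fin N) (y : ℕ → Ω → ℕ) : Prop :=
  ∀ t, 1 ≤ t → ∀ ω, ∀ k : Fin N,
    (∀ j, j ≠ k → 0 < LLRN q a y k j t ω) → a (t + 1) ω = k

open scoped ENNReal

/-! ### Auxiliary lemmas -/


lemma klBern_pos {α β : ℝ} (hα : α ∈ Set.Ioo (0:ℝ) 1) (hβ : β ∈ Set.Ioo (0:ℝ) 1)
    (hne : α ≠ β) : 0 < klBern α β := by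
  obtain ⟨hα0, hα1⟩ := hα
  obtain ⟨hβ0, hβ1⟩ := hβ
  have h1 : Real.log (β / α) < β / α - 1 := by
    apply Real.log_lt_sub_one_of_pos (by positivity)
    intro hc
    exact hne (by field_simp at hc; linarith)
  have h2 : Real.log ((1 - β) / (1 - α)) < (1 - β) / (1 - α) - 1 := by
    have hpos : (0:ℝ) < (1 - β) / (1 - α) := by
      apply div_pos <;> linarith
    apply Real.log_lt_sub_one_of_pos hpos
    intro hc
    apply hne
    rw [div_eq_one_iff_eq (by linarith : (1:ℝ) - α ≠ 0)] at hc
    linarith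
  have e1 : Real.log (α / β) = - Real.log (β / α) := by
    rw [← Real.log_inv]; congr 1; field_simp
  have e2 : Real.log ((1 - α) / (1 - β)) = - Real.log ((1 - β) / (1 - α)) := by
    rw [← Real.log_inv]; congr 1; field_simp
  have hd1 : β / α - 1 = (β - α) / α := by field_simp
  have hd2 : (1 - β) / (1 - α) - 1 = (α - β) / (1 - α) := by
    rw [div_sub_one (by linarith : (1:ℝ) - α ≠ 0)]
    ring_nf
  unfold klBern
  rw [e1, e2]
  have H1 : α * Real.log (β / α) < β - α := by
    have := mul_lt_mul_of_pos_left h1 hα0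
    rw [hd1, mul_div_cancel₀ _ (ne_of_gt hα0)] at this
    linarith
  have H2 : (1 - α) * Real.log ((1 - β) / (1 - α)) < α - β := by
    have := mul_lt_mul_of_pos_left h2 (by linarith : (0:ℝ) < 1 - α)
    rw [hd2, mul_div_cancel₀ _ (by linarith : (1:ℝ) - α ≠ 0)] at this
    linarith
  nlinarith

lemma hoeff_D_pos (θ : ℝ) (h0 : 0 ≤ θ) (h1 : θ ≤ 1) (x : ℝ) :
    0 < 1 - θ + θ * Real.exp x := by
  rcases eq_or_lt_of_le h1 with h | h
  · subst h; simpa using Real.exp_pos x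
  · have : 0 ≤ θ * Real.exp x := mul_nonneg h0 (Real.exp_pos x).le
    linarith

lemma hoeff_core_nonneg (θ : ℝ) (h0 : 0 ≤ θ) (h1 : θ ≤ 1) (x : ℝ) (hx : 0 ≤ x) :
    Real.log (1 - θ + θ * Real.exp x) ≤ θ * x + x ^ 2 / 8 := by
  set D : ℝ → ℝ := fun t => 1 - θ + θ * Real.exp t with hD
  have hDpos : ∀ t, 0 < D t := hoeff_D_pos θ h0 h1
  set F : ℝ → ℝ := fun t => θ * t + t ^ 2 / 8 - Real.log (D t) with hF
  set F' : ℝ → ℝ := fun t => θ + t / 4 - θ * Real.exp t / D t with hF'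
  have hDder : ∀ t, HasDerivAt D (θ * Real.exp t) t := by
    intro t
    exact ((Real.hasDerivAt_exp t).const_mul θ).const_add (1 - θ)
  have hFder : ∀ t, HasDerivAt F (F' t) t := by
    intro t
    have h1' : HasDerivAt (fun t : ℝ => θ * t) θ t := by
      simpa using (hasDerivAt_id t).const_mul θ
    have h2' : HasDerivAt (fun t : ℝ => t ^ 2 / 8) (t / 4) t := by
      have := (hasDerivAt_pow 2 t).div_const 8
      simpa [hF'] using this.congr_deriv (by ring)
    have h3' : HasDerivAt (fun t => Real.log (D t)) (θ * Real.exp t / D t) t :=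
      (hDder t).log (hDpos t).ne'
    exact (h1'.add h2').sub h3'
  have hF'der : ∀ t, HasDerivAt F' (1 / 4 - θ * Real.exp t * (1 - θ) / (D t) ^ 2) t := by
    intro t
    have hq : HasDerivAt (fun t => θ * Real.exp t / D t)
        ((θ * Real.exp t * D t - θ * Real.exp t * (θ * Real.exp t)) / (D t) ^ 2) t :=
      ((Real.hasDerivAt_exp t).const_mul θ).div (hDder t) (hDpos t).ne'
    have h2' : HasDerivAt (fun t : ℝ => θ + t / 4) (1 / 4) t := by
      simpa using ((hasDerivAt_id t).div_const 4).const_add θ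
    have := h2'.sub hq
    have heq : (θ * Real.exp t * D t - θ * Real.exp t * (θ * Real.exp t)) / (D t) ^ 2
        = θ * Real.exp t * (1 - θ) / (D t) ^ 2 := by
      congr 1
      simp only [hD]
      ring
    rw [heq] at this
    exact this
  have hF''nonneg : ∀ t, 0 ≤ 1 / 4 - θ * Real.exp t * (1 - θ) / (D t) ^ 2 := by
    intro t
    rw [sub_nonneg, div_le_iff₀ (pow_pos (hDpos t) 2)]
    have : (D t) = (1 - θ) + θ * Real.exp t := rfl
    nlinarith [sq_nonneg ((1 - θ) - θ * Real.exp t)]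
  have hF'mono : Monotone F' :=
    monotone_of_deriv_nonneg (fun t => (hF'der t).differentiableAt)
      (fun t => by rw [(hF'der t).deriv]; exact hF''nonneg t)
  have hF'0 : F' 0 = 0 := by
    simp only [hF', hD]
    rw [Real.exp_zero]
    have : 1 - θ + θ * 1 = 1 := by ring
    rw [this]
    ring
  have hF'nonneg : ∀ t ∈ Set.Ici (0:ℝ), 0 ≤ F' t := fun t ht => hF'0 ▸ hF'mono ht
  have hFmono : MonotoneOn F (Set.Ici 0) := by
    apply monotoneOn_of_deriv_nonneg (convex_Ici 0)
      (Continuous.continuousOn (by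
        have : ∀ t, DifferentiableAt ℝ F t := fun t => (hFder t).differentiableAt
        exact (Differentiable.continuous this)))
      (fun t _ => (hFder t).differentiableAt.differentiableWithinAt)
    intro t ht
    rw [(hFder t).deriv]
    exact hF'nonneg t (le_of_lt (by simpa using ht))
  have hF0 : F 0 = 0 := by
    simp only [hF, hD]
    rw [Real.exp_zero]
    have : 1 - θ + θ * 1 = 1 := by ring
    rw [this, Real.log_one]
    ring
  have := hFmono (Set.self_mem_Ici) (by exact hx) hx
  rw [hF0] at this
  simp only [hF] at this
  linarith

lemma hoeff_core (θ : ℝ) (h0 : 0 ≤ θ) (h1 : θ ≤ 1) (x : ℝ) :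
    Real.log (1 - θ + θ * Real.exp x) ≤ θ * x + x ^ 2 / 8 := by
  rcases le_or_gt 0 x with hx | hx
  · exact hoeff_core_nonneg θ h0 h1 x hx
  · have key := hoeff_core_nonneg (1 - θ) (by linarith) (by linarith) (-x) (by linarith)
    have hid : 1 - (1 - θ) + (1 - θ) * Real.exp (-x)
        = Real.exp (-x) * (1 - θ + θ * Real.exp x) := by
      rw [Real.exp_neg]
      have h : Real.exp x ≠ 0 := (Real.exp_pos x).ne'
      field_simp
      ring
    rw [hid, Real.log_mul (Real.exp_pos _).ne' (hoeff_D_pos θ h0 h1 x).ne',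
      Real.log_exp] at key
    nlinarith

lemma two_point_mgf (p u v s : ℝ) (hp0 : 0 ≤ p) (hp1 : p ≤ 1) :
    p * Real.exp (s * u) + (1 - p) * Real.exp (s * v)
      ≤ Real.exp (s * (p * u + (1 - p) * v) + (s * (u - v)) ^ 2 / 8) := by
  set x : ℝ := s * (u - v) with hx
  have key := hoeff_core p hp0 hp1 x
  have hDpos := hoeff_D_pos p hp0 hp1 x
  have h1 : 1 - p + p * Real.exp x ≤ Real.exp (p * x + x ^ 2 / 8) := by
    calc 1 - p + p * Real.exp x = Real.exp (Real.log (1 - p + p * Real.exp x)) :=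
          (Real.exp_log hDpos).symm
      _ ≤ _ := Real.exp_le_exp.mpr key
  have h2 := mul_le_mul_of_nonneg_left h1 (Real.exp_pos (s * v)).le
  calc p * Real.exp (s * u) + (1 - p) * Real.exp (s * v)
      = Real.exp (s * v) * (1 - p + p * Real.exp x) := by
        have hsu : s * u = s * v + s * (u - v) := by ring
        rw [hx, hsu, Real.exp_add]
        ring
    _ ≤ Real.exp (s * v) * Real.exp (p * x + x ^ 2 / 8) := h2
    _ = Real.exp (s * (p * u + (1 - p) * v) + (s * (u - v)) ^ 2 / 8) := by
        rw [← Real.exp_add, hx]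
        ring_nf

/-- Per-step log-likelihood value as a function of the arm and the outcome. -/
def gfun {M : ℕ} (q : Fin M → Fin M → ℝ) (i h : Fin M) (k : Fin M) (y' : ℕ) : ℝ :=
  Real.log (bern (q i k) y' / bern (q h k) y')


/-- **Per-pair error bound for ELRT.** Here there are `N + 2 ≥ 2` demand models. If the true
demand model is `i` and `h ≠ i`, then with `a_h = min_k I(q i k ‖ q h k) > 0` one has
`P(L_{i,h}(t) < 0) ≤ exp(−2 a_h² t/(M_h − m_h)²)` for every `t ≥ 1`, and consequently the
expected number of times `t ≥ 1` at which `L_{i,h}(t) < 0` is at most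
`C_h = (M_h − m_h)²/(2 a_h²)`. -/
theorem elrt_per_pair_error_bound
    (μ : Measure Ω) [IsProbabilityMeasure μ] (ℱ : Filtration ℕ mΩ)
    (q : Fin (N + 2) → Fin (N + 2) → ℝ)
    (hq : ∀ i k, q i k ∈ Set.Ioo (0 : ℝ) 1)
    (hni : ∀ j h, j ≠ h → ∀ k, q j k ≠ q h k)
    (i : Fin (N + 2)) (a : ℕ → Ω → Fin (N + 2)) (y : ℕ → Ω → ℕ)
    (hproc : IsPricingProcessN μ ℱ q i a y)
    (hpol : IsELRT q a y)
    (h : Fin (N + 2)) (hhi : h ≠ i)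
    (aH mH MH CH : ℝ)
    (haH : aH = Finset.univ.inf' ⟨0, Finset.mem_univ 0⟩
      (fun k : Fin (N + 2) => klBern (q i k) (q h k)))
    (hmH : mH = Finset.univ.inf' ⟨(0, 0), Finset.mem_univ _⟩
      (fun p : Fin (N + 2) × Fin 2 =>
        Real.log (bern (q i p.1) (p.2 : ℕ) / bern (q h p.1) (p.2 : ℕ))))
    (hMH : MH = Finset.univ.sup' ⟨(0, 0), Finset.mem_univ _⟩
      (fun p : Fin (N + 2) × Fin 2 =>
        Real.log (bern (q i p.1) (p.2 : ℕ) / bern (q h p.1) (p.2 : ℕ))))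
    (hCH : CH = (MH - mH) ^ 2 / (2 * aH ^ 2)) :
    0 < aH ∧
      (∀ t : ℕ, 1 ≤ t →
        μ {ω | LLRN q a y i h t ω < 0}
          ≤ ENNReal.ofReal (Real.exp (-2 * aH ^ 2 * t / (MH - mH) ^ 2))) ∧
      (∫⁻ ω, ∑' t : ℕ, {ω' | LLRN q a y i h (t + 1) ω' < 0}.indicator
          (fun _ => (1 : ℝ≥0∞)) ω ∂μ) ≤ ENNReal.ofReal CH := by
  -- basic positivity
  have haH_pos : 0 < aH := by
    rw [haH]
    refine (Finset.lt_inf'_iff _).2 ?_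
    intro k _
    exact klBern_pos (hq i k) (hq h k) (hni i h (Ne.symm hhi) k)
  -- bounds on per-step values
  have bnd : ∀ (k : Fin (N + 2)) (y' : ℕ), y' = 0 ∨ y' = 1 →
      mH ≤ gfun q i h k y' ∧ gfun q i h k y' ≤ MH := by
    intro k y' hy'
    have key : ∀ p : Fin (N + 2) × Fin 2,
        mH ≤ gfun q i h p.1 (p.2 : ℕ) ∧ gfun q i h p.1 (p.2 : ℕ) ≤ MH := by
      intro p
      constructor
      · rw [hmH]; exact Finset.inf'_le _ (Finset.mem_univ p)
      · rw [hMH]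
        exact Finset.le_sup' (fun p : Fin (N + 2) × Fin 2 =>
          Real.log (bern (q i p.1) (p.2 : ℕ) / bern (q h p.1) (p.2 : ℕ)))
          (Finset.mem_univ p)
    rcases hy' with rfl | rfl
    · simpa using key (k, 0)
    · simpa using key (k, 1)
  -- klBern as a mixture of per-step values
  have hkl : ∀ k, klBern (q i k) (q h k)
      = q i k * gfun q i h k 1 + (1 - q i k) * gfun q i h k 0 := by
    intro k
    simp [gfun, klBern, bern]
  -- MH - mH > 0
  have hR : 0 < MH - mH := by
    obtain ⟨h00, h01⟩ := hq i 0
    obtain ⟨h10, h11⟩ := hq h 0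
    have hne0 : q i 0 ≠ q h 0 := hni i h (Ne.symm hhi) 0
    have e1 : gfun q i h 0 1 = Real.log (q i 0 / q h 0) := by
      simp [gfun, bern]
    have e0 : gfun q i h 0 0 = Real.log ((1 - q i 0) / (1 - q h 0)) := by
      simp [gfun, bern]
    have b1 := bnd 0 1 (Or.inr rfl)
    have b0 := bnd 0 0 (Or.inl rfl)
    rcases lt_or_gt_of_ne hne0 with hlt | hgt
    · have hgneg : gfun q i h 0 1 < 0 := by
        rw [e1]; exact Real.log_neg (div_pos h00 h10) ((div_lt_one (by linarith)).mpr hlt)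
      have hgpos : 0 < gfun q i h 0 0 := by
        rw [e0]; exact Real.log_pos ((one_lt_div (by linarith)).mpr (by linarith))
      linarith [b1.1, b0.2]
    · have hgpos : 0 < gfun q i h 0 1 := by
        rw [e1]; exact Real.log_pos ((one_lt_div (by linarith)).mpr hgt)
      have hgneg : gfun q i h 0 0 < 0 := by
        rw [e0]; exact Real.log_neg (div_pos (by linarith) (by linarith)) ((div_lt_one (by linarith)).mpr (by linarith))
      linarith [b1.2, b0.1]
  -- scalars
  have hR2 : (MH - mH) ^ 2 ≠ 0 := by positivity
  set c : ℝ := 2 * aH ^ 2 / (MH - mH) ^ 2 with hc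
  set lam : ℝ := 4 * aH / (MH - mH) ^ 2 with hlam
  have hc_pos : 0 < c := by rw [hc]; positivity
  have hlam_pos : 0 < lam := by rw [hlam]; positivity
  have haH_le : ∀ k, aH ≤ klBern (q i k) (q h k) := by
    intro k; rw [haH]; exact Finset.inf'_le _ (Finset.mem_univ k)
  -- key pointwise bound
  have keybound : ∀ k : Fin (N + 2),
      q i k * Real.exp (-(lam * gfun q i h k 1))
        + (1 - q i k) * Real.exp (-(lam * gfun q i h k 0)) ≤ Real.exp (-c) := by
    intro k
    obtain ⟨hk0, hk1⟩ := hq i k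
    have htp := two_point_mgf (q i k) (gfun q i h k 1) (gfun q i h k 0) (-lam) hk0.le hk1.le
    have hb1 := bnd k 1 (Or.inr rfl)
    have hb0 := bnd k 0 (Or.inl rfl)
    have hexp_le : -lam * (q i k * gfun q i h k 1 + (1 - q i k) * gfun q i h k 0)
        + (-lam * (gfun q i h k 1 - gfun q i h k 0)) ^ 2 / 8 ≤ -c := by
      have h1 : aH ≤ q i k * gfun q i h k 1 + (1 - q i k) * gfun q i h k 0 := by
        rw [← hkl]; exact haH_le k
      have h2 : (gfun q i h k 1 - gfun q i h k 0) ^ 2 ≤ (MH - mH) ^ 2 :=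
        sq_le_sq' (by linarith [hb1.1, hb0.2]) (by linarith [hb1.2, hb0.1])
      have h3 : (-lam * (gfun q i h k 1 - gfun q i h k 0)) ^ 2
          ≤ lam ^ 2 * (MH - mH) ^ 2 := by
        have he : (-lam * (gfun q i h k 1 - gfun q i h k 0)) ^ 2
            = lam ^ 2 * (gfun q i h k 1 - gfun q i h k 0) ^ 2 := by ring
        rw [he]
        exact mul_le_mul_of_nonneg_left h2 (sq_nonneg lam)
      have h4 : -lam * (q i k * gfun q i h k 1 + (1 - q i k) * gfun q i h k 0)
          ≤ -lam * aH := by nlinarith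
      have h5 : -lam * aH + lam ^ 2 * (MH - mH) ^ 2 / 8 = -c := by
        rw [hlam, hc]; field_simp; ring
      linarith
    calc q i k * Real.exp (-(lam * gfun q i h k 1))
          + (1 - q i k) * Real.exp (-(lam * gfun q i h k 0))
        = q i k * Real.exp (-lam * gfun q i h k 1)
          + (1 - q i k) * Real.exp (-lam * gfun q i h k 0) := by
          rw [neg_mul, neg_mul]
      _ ≤ Real.exp (-lam * (q i k * gfun q i h k 1 + (1 - q i k) * gfun q i h k 0)
            + (-lam * (gfun q i h k 1 - gfun q i h k 0)) ^ 2 / 8) := htp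
      _ ≤ Real.exp (-c) := Real.exp_le_exp.mpr hexp_le
  -- measurability
  have hmeasX : ∀ j, 1 ≤ j → Measurable[ℱ j] (fun ω => gfun q i h (a j ω) (y j ω)) := by
    intro j hj
    have ha : Measurable[ℱ j] (a j) :=
      (hproc.meas_a j hj).mono (ℱ.mono (Nat.sub_le j 1)) le_rfl
    have hy : Measurable[ℱ j] (y j) := hproc.meas_y j hj
    exact (measurable_of_countable (fun p : Fin (N + 2) × ℕ => gfun q i h p.1 p.2)).comp
      (ha.prodMk hy)
  have hmeasL : ∀ t, Measurable[ℱ t] (fun ω => LLRN q a y i h t ω) := by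
    intro t
    have hsum : ∀ j ∈ Finset.Icc 1 t,
        Measurable[ℱ t] (fun ω => gfun q i h (a j ω) (y j ω)) := by
      intro j hj
      rw [Finset.mem_Icc] at hj
      exact (hmeasX j hj.1).mono (ℱ.mono hj.2) le_rfl
    exact Finset.measurable_sum _ hsum
  -- pointwise bounds on increments and on L
  have hXmem : ∀ j, 1 ≤ j → ∀ ω,
      mH ≤ gfun q i h (a j ω) (y j ω) ∧ gfun q i h (a j ω) (y j ω) ≤ MH :=
    fun j hj ω => bnd _ _ (hproc.y_range j hj ω)
  have hLdef : ∀ t (ω : Ω), LLRN q a y i h t ω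
      = ∑ j ∈ Finset.Icc 1 t, gfun q i h (a j ω) (y j ω) := fun _ _ => rfl
  have hLlb : ∀ (t : ℕ) (ω : Ω), (t : ℝ) * mH ≤ LLRN q a y i h t ω := by
    intro t ω
    rw [hLdef]
    have hs := Finset.sum_le_sum (s := Finset.Icc 1 t) (f := fun _ : ℕ => mH)
      (g := fun j => gfun q i h (a j ω) (y j ω))
      (fun j hj => (hXmem j (Finset.mem_Icc.mp hj).1 ω).1)
    simpa [Finset.sum_const, Nat.card_Icc, mul_comm] using hs
  -- integrability helpers
  have hbd_int : ∀ (f : Ω → ℝ) (C : ℝ), Measurable f → (∀ ω, ‖f ω‖ ≤ C) → Integrable f μ :=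
    fun f C hf hC => (integrable_const C).mono' hf.aestronglyMeasurable
      (Filter.Eventually.of_forall hC)
  have hExpLe : ∀ (x b : ℝ), b ≤ x → ‖Real.exp (-(lam * x))‖ ≤ Real.exp (-(lam * b)) := by
    intro x b hx
    rw [Real.norm_eq_abs, abs_of_pos (Real.exp_pos _)]
    exact Real.exp_le_exp.mpr (by nlinarith [mul_le_mul_of_nonneg_left hx hlam_pos.le])
  have hWmeas : ∀ t, Measurable[ℱ t] (fun ω => Real.exp (-(lam * LLRN q a y i h t ω))) :=
    fun t => Real.measurable_exp.comp ((hmeasL t).const_mul lam).neg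
  have hWint : ∀ t, Integrable (fun ω => Real.exp (-(lam * LLRN q a y i h t ω))) μ :=
    fun t => hbd_int _ (Real.exp (-(lam * ((t : ℝ) * mH))))
      ((hWmeas t).mono (ℱ.le t) le_rfl) (fun ω => hExpLe _ _ (hLlb t ω))
  -- the supermartingale recursion
  have hrec : ∀ t, ∫ ω, Real.exp (-(lam * LLRN q a y i h t ω)) ∂μ ≤ Real.exp (-c) ^ t := by
    intro t
    induction t with
    | zero =>
      have hz : ∀ ω : Ω, Real.exp (-(lam * LLRN q a y i h 0 ω)) = 1 := by
        intro ω
        rw [hLdef]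
        simp
      rw [integral_congr_ae (Filter.Eventually.of_forall hz)]
      simp
    | succ t ih =>
      have hone : (1 : ℕ) ≤ t + 1 := Nat.le_add_left 1 t
      have ha' : Measurable[ℱ t] (a (t + 1)) := hproc.meas_a (t + 1) hone
      -- measurability of pieces
      have hmeas_f0 : Measurable[ℱ t] (fun ω => Real.exp (-(lam * gfun q i h (a (t + 1) ω) 0))) :=
        Real.measurable_exp.comp
          ((((measurable_of_countable (fun k : Fin (N + 2) => gfun q i h k 0)).comp
            ha').const_mul lam).neg)
      have hmeas_e1 : Measurable[ℱ t] (fun ω => Real.exp (-(lam * gfun q i h (a (t + 1) ω) 1))) :=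
        Real.measurable_exp.comp
          ((((measurable_of_countable (fun k : Fin (N + 2) => gfun q i h k 1)).comp
            ha').const_mul lam).neg)
      have hmeas_f1 : Measurable[ℱ t] (fun ω =>
          Real.exp (-(lam * gfun q i h (a (t + 1) ω) 1))
            - Real.exp (-(lam * gfun q i h (a (t + 1) ω) 0))) := hmeas_e1.sub hmeas_f0
      have hmeasS : MeasurableSet[ℱ (t + 1)] {ω | y (t + 1) ω = 1} :=
        hproc.meas_y (t + 1) hone (measurableSet_singleton 1)
      have hmeasSg : MeasurableSet {ω | y (t + 1) ω = 1} := ℱ.le (t + 1) _ hmeasS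
      -- integrability of pieces
      have hint_ind : Integrable (Set.indicator {ω | y (t + 1) ω = 1} (fun _ => (1 : ℝ))) μ :=
        (integrable_const (1 : ℝ)).indicator hmeasSg
      have hg0mem : ∀ ω, mH ≤ gfun q i h (a (t + 1) ω) 0 := fun ω => (bnd _ 0 (Or.inl rfl)).1
      have hg1mem : ∀ ω, mH ≤ gfun q i h (a (t + 1) ω) 1 := fun ω => (bnd _ 1 (Or.inr rfl)).1
      have hint_f0 : Integrable (fun ω => Real.exp (-(lam * gfun q i h (a (t + 1) ω) 0))) μ :=
        hbd_int _ (Real.exp (-(lam * mH))) (hmeas_f0.mono (ℱ.le t) le_rfl)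
          (fun ω => hExpLe _ _ (hg0mem ω))
      have hint_f1ind : Integrable ((fun ω =>
          Real.exp (-(lam * gfun q i h (a (t + 1) ω) 1))
            - Real.exp (-(lam * gfun q i h (a (t + 1) ω) 0)))
          * Set.indicator {ω | y (t + 1) ω = 1} (fun _ => (1 : ℝ))) μ := by
        apply hbd_int _ (2 * Real.exp (-(lam * mH)))
        · exact ((hmeas_f1.mono (ℱ.le t) le_rfl)).mul (measurable_const.indicator hmeasSg)
        · intro ω
          rw [Pi.mul_apply, norm_mul]
          have h1 : ‖Real.exp (-(lam * gfun q i h (a (t + 1) ω) 1))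
              - Real.exp (-(lam * gfun q i h (a (t + 1) ω) 0))‖
              ≤ 2 * Real.exp (-(lam * mH)) := by
            refine (norm_sub_le _ _).trans ?_
            have := hExpLe _ _ (hg1mem ω)
            have := hExpLe _ _ (hg0mem ω)
            linarith
          have h2 : ‖Set.indicator {ω | y (t + 1) ω = 1} (fun _ => (1 : ℝ)) ω‖ ≤ 1 := by
            rw [Real.norm_eq_abs]
            rcases Set.indicator_eq_zero_or_self {ω | y (t + 1) ω = 1} (fun _ => (1 : ℝ)) ω
              with he | he <;> rw [he] <;> norm_num
          calc ‖_‖ * ‖_‖ ≤ (2 * Real.exp (-(lam * mH))) * 1 :=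
                mul_le_mul h1 h2 (norm_nonneg _) (by positivity)
            _ = 2 * Real.exp (-(lam * mH)) := mul_one _
      have hint_G : Integrable
          (fun ω => Real.exp (-(lam * gfun q i h (a (t + 1) ω) (y (t + 1) ω)))) μ := by
        apply hbd_int _ (Real.exp (-(lam * mH)))
        · exact (Real.measurable_exp.comp ((hmeasX (t + 1) hone).const_mul lam).neg).mono
            (ℱ.le (t + 1)) le_rfl
        · exact fun ω => hExpLe _ _ (hXmem (t + 1) hone ω).1
      have hint_WtG : Integrable ((fun ω => Real.exp (-(lam * LLRN q a y i h t ω)))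
          * fun ω => Real.exp (-(lam * gfun q i h (a (t + 1) ω) (y (t + 1) ω)))) μ := by
        apply hbd_int _ (Real.exp (-(lam * ((t : ℝ) * mH))) * Real.exp (-(lam * mH)))
        · exact ((hWmeas t).mono (ℱ.le t) le_rfl).mul
            ((Real.measurable_exp.comp ((hmeasX (t + 1) hone).const_mul lam).neg).mono
              (ℱ.le (t + 1)) le_rfl)
        · intro ω
          rw [Pi.mul_apply, norm_mul]
          exact mul_le_mul (hExpLe _ _ (hLlb t ω)) (hExpLe _ _ (hXmem (t + 1) hone ω).1)
            (norm_nonneg _) (by positivity)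
      -- decomposition of the step factor
      have hGdecomp : (fun ω => Real.exp (-(lam * gfun q i h (a (t + 1) ω) (y (t + 1) ω))))
          = (fun ω => Real.exp (-(lam * gfun q i h (a (t + 1) ω) 0)))
            + (fun ω => Real.exp (-(lam * gfun q i h (a (t + 1) ω) 1))
                - Real.exp (-(lam * gfun q i h (a (t + 1) ω) 0)))
              * Set.indicator {ω | y (t + 1) ω = 1} (fun _ => (1 : ℝ)) := by
        funext ω
        rcases hproc.y_range (t + 1) hone ω with h0 | h1
        · have hmem : ω ∉ {ω | y (t + 1) ω = 1} := by simp [Set.mem_setOf_eq, h0]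
          simp [Set.indicator_of_notMem hmem, h0]
        · have hmem : ω ∈ {ω | y (t + 1) ω = 1} := h1
          simp only [Pi.add_apply, Pi.mul_apply, Set.indicator_of_mem hmem, h1, mul_one]
          ring
      -- conditional expectation of the step factor
      have hsale : μ[Set.indicator {ω | y (t + 1) ω = 1} (fun _ => (1 : ℝ)) | ℱ t]
          =ᵐ[μ] fun ω => q i (a (t + 1) ω) := hproc.sale_prob (t + 1) hone
      have hcG1 : μ[(fun ω => Real.exp (-(lam * gfun q i h (a (t + 1) ω) (y (t + 1) ω)))) | ℱ t]
          =ᵐ[μ] fun ω => Real.exp (-(lam * gfun q i h (a (t + 1) ω) 0))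
            + (Real.exp (-(lam * gfun q i h (a (t + 1) ω) 1))
                - Real.exp (-(lam * gfun q i h (a (t + 1) ω) 0))) * q i (a (t + 1) ω) := by
        rw [hGdecomp]
        calc μ[(fun ω => Real.exp (-(lam * gfun q i h (a (t + 1) ω) 0)))
              + (fun ω => Real.exp (-(lam * gfun q i h (a (t + 1) ω) 1))
                  - Real.exp (-(lam * gfun q i h (a (t + 1) ω) 0)))
                * Set.indicator {ω | y (t + 1) ω = 1} (fun _ => (1 : ℝ)) | ℱ t]
            =ᵐ[μ] μ[(fun ω => Real.exp (-(lam * gfun q i h (a (t + 1) ω) 0))) | ℱ t]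
              + μ[(fun ω => Real.exp (-(lam * gfun q i h (a (t + 1) ω) 1))
                  - Real.exp (-(lam * gfun q i h (a (t + 1) ω) 0)))
                * Set.indicator {ω | y (t + 1) ω = 1} (fun _ => (1 : ℝ)) | ℱ t] :=
              condExp_add hint_f0 hint_f1ind _
          _ =ᵐ[μ] (fun ω => Real.exp (-(lam * gfun q i h (a (t + 1) ω) 0)))
              + (fun ω => Real.exp (-(lam * gfun q i h (a (t + 1) ω) 1))
                  - Real.exp (-(lam * gfun q i h (a (t + 1) ω) 0)))
                * μ[Set.indicator {ω | y (t + 1) ω = 1} (fun _ => (1 : ℝ)) | ℱ t] := by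
              rw [condExp_of_stronglyMeasurable (ℱ.le t) hmeas_f0.stronglyMeasurable hint_f0]
              exact Filter.EventuallyEq.add (Filter.EventuallyEq.rfl)
                (condExp_mul_of_stronglyMeasurable_left hmeas_f1.stronglyMeasurable hint_f1ind hint_ind)
          _ =ᵐ[μ] fun ω => Real.exp (-(lam * gfun q i h (a (t + 1) ω) 0))
              + (Real.exp (-(lam * gfun q i h (a (t + 1) ω) 1))
                  - Real.exp (-(lam * gfun q i h (a (t + 1) ω) 0))) * q i (a (t + 1) ω) := by
              filter_upwards [hsale] with ω hω
              simp only [Pi.add_apply, Pi.mul_apply, hω]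
      have hGle : μ[(fun ω => Real.exp (-(lam * gfun q i h (a (t + 1) ω) (y (t + 1) ω)))) | ℱ t]
          ≤ᵐ[μ] fun _ => Real.exp (-c) := by
        filter_upwards [hcG1] with ω hω
        rw [hω]
        have hkb := keybound (a (t + 1) ω)
        nlinarith [hkb]
      -- the multiplicative step
      have hWsucc : (fun ω => Real.exp (-(lam * LLRN q a y i h (t + 1) ω)))
          = (fun ω => Real.exp (-(lam * LLRN q a y i h t ω)))
            * fun ω => Real.exp (-(lam * gfun q i h (a (t + 1) ω) (y (t + 1) ω))) := by
        funext ω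
        rw [Pi.mul_apply, ← Real.exp_add]
        congr 1
        rw [hLdef (t + 1), Finset.sum_Icc_succ_top hone, ← hLdef t]
        ring
      have hmul := condExp_mul_of_stronglyMeasurable_left (m := ℱ t)
        (hWmeas t).stronglyMeasurable
        (by rw [← hWsucc]; exact hWint (t + 1)) hint_G
      calc ∫ ω, Real.exp (-(lam * LLRN q a y i h (t + 1) ω)) ∂μ
          = ∫ ω, ((fun ω => Real.exp (-(lam * LLRN q a y i h t ω)))
              * fun ω => Real.exp (-(lam * gfun q i h (a (t + 1) ω) (y (t + 1) ω)))) ω ∂μ := by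
            rw [hWsucc]
        _ = ∫ ω, (μ[(fun ω => Real.exp (-(lam * LLRN q a y i h t ω)))
              * fun ω => Real.exp (-(lam * gfun q i h (a (t + 1) ω) (y (t + 1) ω))) | ℱ t]) ω ∂μ :=
            (integral_condExp (ℱ.le t)).symm
        _ = ∫ ω, Real.exp (-(lam * LLRN q a y i h t ω))
              * (μ[(fun ω => Real.exp (-(lam * gfun q i h (a (t + 1) ω) (y (t + 1) ω)))) | ℱ t]) ω ∂μ :=
            integral_congr_ae hmul
        _ ≤ ∫ ω, Real.exp (-(lam * LLRN q a y i h t ω)) * Real.exp (-c) ∂μ := by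
            refine integral_mono_ae (integrable_condExp.congr hmul) ((hWint t).mul_const _) ?_
            filter_upwards [hGle] with ω hω
            exact mul_le_mul_of_nonneg_left hω (Real.exp_pos _).le
        _ = (∫ ω, Real.exp (-(lam * LLRN q a y i h t ω)) ∂μ) * Real.exp (-c) :=
            integral_mul_const _ _
        _ ≤ Real.exp (-c) ^ t * Real.exp (-c) :=
            mul_le_mul_of_nonneg_right ih (Real.exp_pos _).le
        _ = Real.exp (-c) ^ (t + 1) := (pow_succ _ t).symm
  -- Chernoff bound for each t
  have main : ∀ t : ℕ, μ {ω | LLRN q a y i h t ω < 0}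
      ≤ ENNReal.ofReal (Real.exp (-c) ^ t) := by
    intro t
    have hsub : {ω | LLRN q a y i h t ω < 0}
        ⊆ {ω | (1 : ℝ≥0∞) ≤ ENNReal.ofReal (Real.exp (-(lam * LLRN q a y i h t ω)))} := by
      intro ω hω
      simp only [Set.mem_setOf_eq] at hω ⊢
      rw [ENNReal.one_le_ofReal]
      apply Real.one_le_exp
      nlinarith [hlam_pos]
    have hmeasW : AEMeasurable
        (fun ω => ENNReal.ofReal (Real.exp (-(lam * LLRN q a y i h t ω)))) μ :=
      (((hWmeas t).mono (ℱ.le t) le_rfl).ennreal_ofReal).aemeasurable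
    calc μ {ω | LLRN q a y i h t ω < 0}
        ≤ μ {ω | (1 : ℝ≥0∞) ≤ ENNReal.ofReal (Real.exp (-(lam * LLRN q a y i h t ω)))} :=
          measure_mono hsub
      _ ≤ ∫⁻ ω, ENNReal.ofReal (Real.exp (-(lam * LLRN q a y i h t ω))) ∂μ := by
          have hmk := mul_meas_ge_le_lintegral₀ hmeasW 1
          simpa using hmk
      _ = ENNReal.ofReal (∫ ω, Real.exp (-(lam * LLRN q a y i h t ω)) ∂μ) :=
          (ofReal_integral_eq_lintegral_ofReal (hWint t)
            (Filter.Eventually.of_forall fun ω => (Real.exp_pos _).le)).symm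
      _ ≤ ENNReal.ofReal (Real.exp (-c) ^ t) := ENNReal.ofReal_le_ofReal (hrec t)
  have hconv : ∀ t : ℕ, Real.exp (-c) ^ t = Real.exp (-2 * aH ^ 2 * t / (MH - mH) ^ 2) := by
    intro t
    rw [← Real.exp_nat_mul]
    congr 1
    rw [hc]
    field_simp
  refine ⟨haH_pos, fun t _ => by rw [← hconv t]; exact main t, ?_⟩
  -- expected number of errors
  have hmeasSet : ∀ t : ℕ, MeasurableSet {ω | LLRN q a y i h t ω < 0} := fun t =>
    measurableSet_lt ((hmeasL t).mono (ℱ.le t) le_rfl) measurable_const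
  rw [lintegral_tsum
    (fun t => ((measurable_const.indicator (hmeasSet (t + 1)))).aemeasurable)]
  have hind_eq : ∀ t : ℕ, ∫⁻ ω, {ω' | LLRN q a y i h (t + 1) ω' < 0}.indicator
      (fun _ => (1 : ℝ≥0∞)) ω ∂μ = μ {ω | LLRN q a y i h (t + 1) ω < 0} := fun t =>
    lintegral_indicator_one (hmeasSet (t + 1))
  have he_pos : (0:ℝ) < Real.exp (-c) := Real.exp_pos _
  have he1 : Real.exp (-c) < 1 := Real.exp_lt_one_iff.mpr (by linarith)
  have h1e : (0:ℝ) < 1 - Real.exp (-c) := by linarith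
  calc ∑' t : ℕ, ∫⁻ ω, {ω' | LLRN q a y i h (t + 1) ω' < 0}.indicator
        (fun _ => (1 : ℝ≥0∞)) ω ∂μ
      = ∑' t : ℕ, μ {ω | LLRN q a y i h (t + 1) ω < 0} := tsum_congr hind_eq
    _ ≤ ∑' t : ℕ, ENNReal.ofReal (Real.exp (-c)) ^ (t + 1) :=
        ENNReal.tsum_le_tsum (fun t => by
          rw [← ENNReal.ofReal_pow he_pos.le]
          exact main (t + 1))
    _ = ENNReal.ofReal (Real.exp (-c)) * (1 - ENNReal.ofReal (Real.exp (-c)))⁻¹ :=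
        ENNReal.tsum_geometric_add_one _
    _ ≤ ENNReal.ofReal CH := by
        have h1 : (1 : ℝ≥0∞) - ENNReal.ofReal (Real.exp (-c))
            = ENNReal.ofReal (1 - Real.exp (-c)) := by
          rw [ENNReal.ofReal_sub 1 he_pos.le, ENNReal.ofReal_one]
        rw [h1, ← ENNReal.ofReal_inv_of_pos h1e, ← ENNReal.ofReal_mul he_pos.le]
        apply ENNReal.ofReal_le_ofReal
        have hCHc : CH = c⁻¹ := by rw [hCH, hc, inv_div]
        rw [hCHc, ← div_eq_mul_inv, inv_eq_one_div, div_le_div_iff₀ h1e hc_pos]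
        have hE := mul_le_mul_of_nonneg_left (Real.add_one_le_exp c) he_pos.le
        have hprod : Real.exp (-c) * Real.exp c = 1 := by
          rw [← Real.exp_add]; simp
        nlinarith
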